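/- Let 𝓟 be a completely positive trace-preserving map on a bipartite system A⊗B that is semicausal from A to B, meaning there exists a completely positive map 𝓣 on A such that Tr_{B₂} 𝓟(ρ_{AB}) = 𝓣(Tr_B ρ_{AB}) for all states ρ_{AB}. Then for any initial state ρ_{A₁B₁}, the pseudo-density matrix R_{B₁A₂} obtained by tracing out A₁ and B₂ from the two-time PDM equals (𝓣 ⊗ id_B)(ρ_{A₁B₁}) (with tensor factors reordered), and in particular R_{B₁A₂} is positive semidefinite. -/

import Mathlib

open Matrix Kronecker ComplexOrder

/-- Partial trace over the second tensor factor. -/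
noncomputable def ptraceRight {d₁ d₂ : Type*} [Fintype d₂]
    (M : Matrix (d₁ × d₂) (d₁ × d₂) ℂ) : Matrix d₁ d₁ ℂ :=
  fun i j => ∑ k : d₂, M (i, k) (j, k)

/-- The Choi matrix of a linear map on matrices (standard convention,
`Choi((i,k),(j,l)) = 𝓜(|i⟩⟨j|) k l`). -/
noncomputable def choiStd {n : Type*} [Fintype n] [DecidableEq n]
    (𝓜 : Matrix n n ℂ →ₗ[ℂ] Matrix n n ℂ) : Matrix (n × n) (n × n) ℂ :=
  fun p q => 𝓜 (Matrix.single p.1 q.1 1) p.2 q.2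

/-- A map is completely positive iff its Choi matrix is positive semidefinite. -/
noncomputable def IsCompletelyPositive {n : Type*} [Fintype n] [DecidableEq n]
    (𝓜 : Matrix n n ℂ →ₗ[ℂ] Matrix n n ℂ) : Prop :=
  (choiStd 𝓜).PosSemidef

/-- The Choi matrix in the PDM (transposed) convention,
`M = Σᵢⱼ |i⟩⟨j|ᵀ ⊗ 𝓜(|i⟩⟨j|)`. -/
noncomputable def choiMatrix {n : Type*} [Fintype n] [DecidableEq n]
    (𝓜 : Matrix n n ℂ →ₗ[ℂ] Matrix n n ℂ) : Matrix (n × n) (n × n) ℂ :=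
  ∑ i : n, ∑ j : n, (Matrix.single i j (1 : ℂ))ᵀ ⊗ₖ 𝓜 (Matrix.single i j 1)

/-- The map `𝓣 ⊗ id_B` applied to a bipartite matrix. -/
noncomputable def tensorId {dA dB : Type*} [Fintype dA] [DecidableEq dA]
    (𝓣 : Matrix dA dA ℂ →ₗ[ℂ] Matrix dA dA ℂ)
    (ρ : Matrix (dA × dB) (dA × dB) ℂ) : Matrix (dA × dB) (dA × dB) ℂ :=
  fun p q => ∑ i : dA, ∑ i' : dA,
    𝓣 (Matrix.single i i' 1) p.1 q.1 * ρ (i, p.2) (i', q.2)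

lemma choiMatrix_apply' {n : Type*} [Fintype n] [DecidableEq n]
    (𝓜 : Matrix n n ℂ →ₗ[ℂ] Matrix n n ℂ) (a b c d : n) :
    choiMatrix 𝓜 (a, b) (c, d) = 𝓜 (Matrix.single c a 1) b d := by
  unfold choiMatrix
  simp only [Matrix.sum_apply, Matrix.kroneckerMap_apply, Matrix.transpose_apply,
    Matrix.single, Matrix.of_apply, ite_mul, one_mul, zero_mul, ite_and]
  simp [Finset.sum_ite_eq, Finset.sum_ite_eq']

lemma ptraceRight_std' {dA dB : Type*} [Fintype dB] [DecidableEq dA] [DecidableEq dB]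
    (a i : dA) (b j : dB) :
    ptraceRight (Matrix.single ((a, b) : dA × dB) (i, j) (1 : ℂ))
      = if b = j then Matrix.single a i 1 else 0 := by
  ext x y
  simp only [ptraceRight, Matrix.single, Matrix.of_apply, Prod.mk.injEq]
  rw [Finset.sum_eq_single b]
  · by_cases hbj : b = j <;> simp [hbj, eq_comm (a := j), and_comm, and_assoc, and_left_comm]
  · intro z _ hz; simp [Ne.symm hz]
  · simp

lemma sum_swap4' {ι₁ ι₂ ι₃ ι₄ : Type*} [Fintype ι₁] [Fintype ι₂] [Fintype ι₃] [Fintype ι₄]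
    (f : ι₁ → ι₂ → ι₃ → ι₄ → ℂ) :
    ∑ a, ∑ b, ∑ c, ∑ d, f a b c d = ∑ c, ∑ d, ∑ a, ∑ b, f a b c d := by
  calc ∑ a, ∑ b, ∑ c, ∑ d, f a b c d
      = ∑ a, ∑ c, ∑ b, ∑ d, f a b c d :=
        Finset.sum_congr rfl fun a _ => Finset.sum_comm
    _ = ∑ c, ∑ a, ∑ b, ∑ d, f a b c d := Finset.sum_comm
    _ = ∑ c, ∑ a, ∑ d, ∑ b, f a b c d :=
        Finset.sum_congr rfl fun c _ => Finset.sum_congr rfl fun a _ => Finset.sum_comm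
    _ = ∑ c, ∑ d, ∑ a, ∑ b, f a b c d :=
        Finset.sum_congr rfl fun c _ => Finset.sum_comm

/-- **Null PDM negativity for semicausal channels.** If the CPTP map `𝓟` on `A ⊗ B` is
semicausal from `A` to `B` (no signalling from `B` to `A`), witnessed by the CP map
`𝓣` on `A` via `Tr_{B₂} 𝓟(ρ) = 𝓣(Tr_B ρ)`, then for any initial state `ρ_{A₁B₁}` the
reduced PDM `R_{B₁A₂} = Tr_{A₁B₂} R` equals `(𝓣 ⊗ id_B)(ρ_{A₁B₁})` with the two tensor
factors reordered, and in particular `R_{B₁A₂}` is positive semidefinite. -/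
theorem semicausal_pdm_posSemidef {dA dB : Type*}
    [Fintype dA] [DecidableEq dA] [Fintype dB] [DecidableEq dB]
    (𝓟 : Matrix (dA × dB) (dA × dB) ℂ →ₗ[ℂ] Matrix (dA × dB) (dA × dB) ℂ)
    (h𝓟cp : IsCompletelyPositive 𝓟) (h𝓟tp : ∀ X, (𝓟 X).trace = X.trace)
    (𝓣 : Matrix dA dA ℂ →ₗ[ℂ] Matrix dA dA ℂ) (h𝓣cp : IsCompletelyPositive 𝓣)
    (hsemi : ∀ X : Matrix (dA × dB) (dA × dB) ℂ, ptraceRight (𝓟 X) = 𝓣 (ptraceRight X))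
    (ρ : Matrix (dA × dB) (dA × dB) ℂ) (hρ : ρ.PosSemidef) (hρtr : ρ.trace = 1)
    (R : Matrix ((dA × dB) × dA × dB) ((dA × dB) × dA × dB) ℂ)
    (hRdef : R = (2 : ℂ)⁻¹ • (choiMatrix 𝓟 * (ρ ⊗ₖ 1) + (ρ ⊗ₖ 1) * choiMatrix 𝓟))
    (RBA : Matrix (dB × dA) (dB × dA) ℂ)
    (hRBAdef : ∀ j k j' k',
      RBA (j, k) (j', k')
        = ∑ i : dA, ∑ l : dB, R ((i, j), (k, l)) ((i, j'), (k', l))) :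
    (∀ j k j' k', RBA (j, k) (j', k') = tensorId 𝓣 ρ (k, j) (k', j')) ∧
      RBA.PosSemidef := by
  classical
  -- Key computation A : partial trace of `choiMatrix 𝓟 * (ρ ⊗ₖ 1)`
  have keyA : ∀ j k j' k',
      (∑ i : dA, ∑ l : dB,
        (choiMatrix 𝓟 * (ρ ⊗ₖ (1 : Matrix (dA × dB) (dA × dB) ℂ)))
          ((i, j), (k, l)) ((i, j'), (k', l)))
      = tensorId 𝓣 ρ (k, j) (k', j') := by
    intro j k j' k'
    have e1 : ∀ (i : dA) (l : dB),
        (choiMatrix 𝓟 * (ρ ⊗ₖ (1 : Matrix (dA × dB) (dA × dB) ℂ)))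
          ((i, j), (k, l)) ((i, j'), (k', l))
        = ∑ s : dA × dB,
            𝓟 (Matrix.single s (i, j) 1) (k, l) (k', l) * ρ s (i, j') := by
      intro i l
      rw [Matrix.mul_apply, Fintype.sum_prod_type]
      refine Finset.sum_congr rfl fun s _ => ?_
      rw [Finset.sum_eq_single ((k', l) : dA × dB)]
      · rw [choiMatrix_apply']
        simp [Matrix.one_apply, mul_comm]
      · intro t _ ht
        simp [Matrix.one_apply, ht]
      · simp
    simp_rw [e1]
    have e2 : ∀ i : dA,
        (∑ l : dB, ∑ s : dA × dB,
          𝓟 (Matrix.single s (i, j) 1) (k, l) (k', l) * ρ s (i, j'))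
        = ∑ s : dA × dB,
            𝓣 (ptraceRight (Matrix.single s (i, j) 1)) k k' * ρ s (i, j') := by
      intro i
      rw [Finset.sum_comm]
      refine Finset.sum_congr rfl fun s _ => ?_
      rw [← Finset.sum_mul, ← hsemi]
      rfl
    simp_rw [e2]
    have e3 : ∀ (i a : dA) (b : dB),
        𝓣 (ptraceRight (Matrix.single ((a, b) : dA × dB) (i, j) 1)) k k'
        = if b = j then 𝓣 (Matrix.single a i 1) k k' else 0 := by
      intro i a b
      rw [ptraceRight_std']
      split_ifs with h
      · rfl
      · simp
    calc ∑ i : dA, ∑ s : dA × dB,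
          𝓣 (ptraceRight (Matrix.single s (i, j) 1)) k k' * ρ s (i, j')
        = ∑ i : dA, ∑ a : dA, ∑ b : dB,
            (if b = j then 𝓣 (Matrix.single a i 1) k k' else 0) * ρ (a, b) (i, j') := by
          refine Finset.sum_congr rfl fun i _ => ?_
          rw [Fintype.sum_prod_type]
          exact Finset.sum_congr rfl fun a _ => Finset.sum_congr rfl fun b _ => by rw [e3]
      _ = ∑ i : dA, ∑ a : dA, 𝓣 (Matrix.single a i 1) k k' * ρ (a, j) (i, j') := by
          refine Finset.sum_congr rfl fun i _ => Finset.sum_congr rfl fun a _ => ?_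
          simp [ite_mul]
      _ = tensorId 𝓣 ρ (k, j) (k', j') := by
          rw [Finset.sum_comm]; rfl
  -- Key computation B : partial trace of `(ρ ⊗ₖ 1) * choiMatrix 𝓟`
  have keyB : ∀ j k j' k',
      (∑ i : dA, ∑ l : dB,
        ((ρ ⊗ₖ (1 : Matrix (dA × dB) (dA × dB) ℂ)) * choiMatrix 𝓟)
          ((i, j), (k, l)) ((i, j'), (k', l)))
      = tensorId 𝓣 ρ (k, j) (k', j') := by
    intro j k j' k'
    have e1 : ∀ (i : dA) (l : dB),
        ((ρ ⊗ₖ (1 : Matrix (dA × dB) (dA × dB) ℂ)) * choiMatrix 𝓟)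
          ((i, j), (k, l)) ((i, j'), (k', l))
        = ∑ s : dA × dB,
            ρ (i, j) s * 𝓟 (Matrix.single (i, j') s 1) (k, l) (k', l) := by
      intro i l
      rw [Matrix.mul_apply, Fintype.sum_prod_type]
      refine Finset.sum_congr rfl fun s _ => ?_
      rw [Finset.sum_eq_single ((k, l) : dA × dB)]
      · rw [choiMatrix_apply']
        simp [Matrix.one_apply]
      · intro t _ ht
        simp [Matrix.one_apply, Ne.symm ht]
      · simp
    simp_rw [e1]
    have e2 : ∀ i : dA,
        (∑ l : dB, ∑ s : dA × dB,
          ρ (i, j) s * 𝓟 (Matrix.single (i, j') s 1) (k, l) (k', l))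
        = ∑ s : dA × dB,
            ρ (i, j) s * 𝓣 (ptraceRight (Matrix.single (i, j') s 1)) k k' := by
      intro i
      rw [Finset.sum_comm]
      refine Finset.sum_congr rfl fun s _ => ?_
      rw [← Finset.mul_sum, ← hsemi]
      rfl
    simp_rw [e2]
    have e3 : ∀ (i a : dA) (b : dB),
        𝓣 (ptraceRight (Matrix.single (i, j') ((a, b) : dA × dB) 1)) k k'
        = if j' = b then 𝓣 (Matrix.single i a 1) k k' else 0 := by
      intro i a b
      rw [ptraceRight_std']
      split_ifs with h
      · rfl
      · simp
    calc ∑ i : dA, ∑ s : dA × dB,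
          ρ (i, j) s * 𝓣 (ptraceRight (Matrix.single (i, j') s 1)) k k'
        = ∑ i : dA, ∑ a : dA, ∑ b : dB,
            ρ (i, j) (a, b) * (if j' = b then 𝓣 (Matrix.single i a 1) k k' else 0) := by
          refine Finset.sum_congr rfl fun i _ => ?_
          rw [Fintype.sum_prod_type]
          exact Finset.sum_congr rfl fun a _ => Finset.sum_congr rfl fun b _ => by rw [e3]
      _ = ∑ i : dA, ∑ a : dA, ρ (i, j) (a, j') * 𝓣 (Matrix.single i a 1) k k' := by
          refine Finset.sum_congr rfl fun i _ => Finset.sum_congr rfl fun a _ => ?_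
          simp [mul_ite]
      _ = tensorId 𝓣 ρ (k, j) (k', j') :=
          Finset.sum_congr rfl fun i _ => Finset.sum_congr rfl fun a _ => mul_comm _ _
  -- Part one: the reduced PDM equals `𝓣 ⊗ id` applied to `ρ` (reordered)
  have part1 : ∀ j k j' k', RBA (j, k) (j', k') = tensorId 𝓣 ρ (k, j) (k', j') := by
    intro j k j' k'
    rw [hRBAdef]
    simp only [hRdef, Matrix.smul_apply, Matrix.add_apply, smul_eq_mul]
    simp only [← Finset.mul_sum]
    simp only [Finset.sum_add_distrib]
    rw [keyA j k j' k', keyB j k j' k']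
    ring
  refine ⟨part1, ?_⟩
  -- Part two: positivity
  obtain ⟨V, hV⟩ : ∃ V : Matrix (dA × dA) (dA × dA) ℂ, choiStd 𝓣 = Vᴴ * V := by
    open scoped MatrixOrder in exact CStarAlgebra.nonneg_iff_eq_star_mul_self.mp h𝓣cp.nonneg
  obtain ⟨W, hW⟩ : ∃ W : Matrix (dA × dB) (dA × dB) ℂ, ρ = Wᴴ * W := by
    open scoped MatrixOrder in exact CStarAlgebra.nonneg_iff_eq_star_mul_self.mp hρ.nonneg
  set Y : Matrix ((dA × dA) × dA × dB) (dB × dA) ℂ :=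
    fun p q => ∑ i : dA, V p.1 (i, q.2) * W p.2 (i, q.1) with hY
  have hRBAY : RBA = Yᴴ * Y := by
    ext p q
    obtain ⟨j, k⟩ := p; obtain ⟨j', k'⟩ := q
    rw [part1 j k j' k']
    have hC : ∀ (i i' : dA), 𝓣 (Matrix.single i i' 1) k k'
        = ∑ α : dA × dA, star (V α (i, k)) * V α (i', k') := by
      intro i i'
      have h := congrFun (congrFun hV (i, k)) (i', k')
      simpa [choiStd, Matrix.mul_apply, Matrix.conjTranspose_apply] using h
    have hρe : ∀ (i i' : dA), ρ (i, j) (i', j')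
        = ∑ β : dA × dB, star (W β (i, j)) * W β (i', j') := by
      intro i i'
      have h := congrFun (congrFun hW (i, j)) (i', j')
      simpa [Matrix.mul_apply, Matrix.conjTranspose_apply] using h
    have lhs_eq : tensorId 𝓣 ρ (k, j) (k', j')
        = ∑ i : dA, ∑ i' : dA, ∑ α : dA × dA, ∑ β : dA × dB,
            (star (V α (i, k)) * V α (i', k')) * (star (W β (i, j)) * W β (i', j')) := by
      show (∑ i : dA, ∑ i' : dA,
          𝓣 (Matrix.single i i' 1) k k' * ρ (i, j) (i', j')) = _
      refine Finset.sum_congr rfl fun i _ => Finset.sum_congr rfl fun i' _ => ?_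
      rw [hC i i', hρe i i', Finset.sum_mul_sum]
    have rhs_eq : (Yᴴ * Y) (j, k) (j', k')
        = ∑ α : dA × dA, ∑ β : dA × dB, ∑ i : dA, ∑ i' : dA,
            (star (V α (i, k)) * V α (i', k')) * (star (W β (i, j)) * W β (i', j')) := by
      rw [Matrix.mul_apply, Fintype.sum_prod_type]
      refine Finset.sum_congr rfl fun α _ => Finset.sum_congr rfl fun β _ => ?_
      rw [Matrix.conjTranspose_apply, hY]
      simp only [star_sum, star_mul']
      rw [Finset.sum_mul_sum]
      refine Finset.sum_congr rfl fun i _ => Finset.sum_congr rfl fun i' _ => ?_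
      ring
    rw [lhs_eq, rhs_eq, sum_swap4']
  rw [hRBAY]
  exact Matrix.posSemidef_conjTranspose_mul_self Y
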